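/- Let d₁ = d₂d₃ − 1 and let φ = Σᵢ |i⟩⊗φᵢ and ψ = Σᵢ |i⟩⊗ψᵢ in ℂ^{d₁}⊗(ℂ^{d₂}⊗ℂ^{d₃}) with the families (φᵢ) and (ψᵢ) each linearly independent (i = 0,…,d₁−1). Let φ′ and ψ′ be nonzero vectors spanning the one-dimensional orthogonal complements of span{φᵢ} and span{ψᵢ} in ℂ^{d₂}⊗ℂ^{d₃}. Then there exist invertible L₁, L₂, L₃ with φ = (L₁⊗L₂⊗L₃)ψ if and only if φ′ and ψ′ have the same bipartite (matrix) rank as elements of ℂ^{d₂}⊗ℂ^{d₃}. -/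

import Mathlib

/-!
STATEMENT 11: Let d₁ = d₂d₃ − 1 and φ = Σᵢ|i⟩⊗φᵢ, ψ = Σᵢ|i⟩⊗ψᵢ in
ℂ^{d₁}⊗(ℂ^{d₂}⊗ℂ^{d₃}), with (φᵢ) and (ψᵢ) linearly independent families.
Let φ′, ψ′ be nonzero vectors spanning the one-dimensional orthogonal
complements of span{φᵢ} and span{ψᵢ}.  Then φ and ψ are related by invertible
local operators L₁⊗L₂⊗L₃ iff φ′ and ψ′ have the same bipartite (matrix) rank.
Elements of ℂ^{d₂}⊗ℂ^{d₃} are modeled as d₂×d₃ matrices, φ and ψ by the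
families of matrices (φᵢ), (ψᵢ); the action of L₂⊗L₃ on a matrix A is
L₂ * A * L₃ᵀ, and (L₁⊗L₂⊗L₃)ψ has i-th component Σⱼ (L₁)ᵢⱼ • (L₂ * ψⱼ * L₃ᵀ).
The standard Hermitian inner product of A and B is Σ conj(A a b) * B a b.
-/

open scoped BigOperators Matrix



open Module Submodule

private lemma aux_inj {K V W : Type*} [Field K] [AddCommGroup V] [Module K V]
    [AddCommGroup W] [Module K W]
    (f : V →ₗ[K] W) (C : Submodule K V) (hC : Disjoint (LinearMap.ker f) C) :
    Function.Injective (f.domRestrict C) := by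
  intro x y hxy
  have hm : (x : V) - y ∈ LinearMap.ker f ⊓ C :=
    Submodule.mem_inf.mpr ⟨LinearMap.mem_ker.mpr (by rw [map_sub, sub_eq_zero]; exact hxy),
      sub_mem x.2 y.2⟩
  rw [hC.eq_bot] at hm
  exact Subtype.ext (sub_eq_zero.mp hm)

private lemma aux_range {K V W : Type*} [Field K] [AddCommGroup V] [Module K V]
    [AddCommGroup W] [Module K W]
    (f : V →ₗ[K] W) (C : Submodule K V) (hC : (LinearMap.ker f) ⊔ C = ⊤) :
    LinearMap.range (f.domRestrict C) = LinearMap.range f := by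
  apply le_antisymm
  · rintro _ ⟨x, rfl⟩; exact ⟨x, rfl⟩
  · rintro _ ⟨v, rfl⟩
    have hv : v ∈ LinearMap.ker f ⊔ C := by rw [hC]; trivial
    obtain ⟨k, hk, c, hc, rfl⟩ := Submodule.mem_sup.mp hv
    exact ⟨⟨c, hc⟩, by simp [LinearMap.mem_ker.mp hk]⟩

private lemma equiv_of_rank_eq {K V W : Type*} [Field K] [AddCommGroup V] [Module K V]
    [AddCommGroup W] [Module K W] [FiniteDimensional K V] [FiniteDimensional K W]
    (f g : V →ₗ[K] W)
    (h : finrank K (LinearMap.range f) = finrank K (LinearMap.range g)) :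
    ∃ (e : V ≃ₗ[K] V) (e' : W ≃ₗ[K] W), ∀ v, f v = e' (g (e v)) := by
  obtain ⟨Cf, hCf⟩ := Submodule.exists_isCompl (LinearMap.ker f)
  obtain ⟨Cg, hCg⟩ := Submodule.exists_isCompl (LinearMap.ker g)
  obtain ⟨Df, hDf⟩ := Submodule.exists_isCompl (LinearMap.range f)
  obtain ⟨Dg, hDg⟩ := Submodule.exists_isCompl (LinearMap.range g)
  let fEq : Cf ≃ₗ[K] LinearMap.range f :=
    (LinearEquiv.ofInjective _ (aux_inj f Cf hCf.disjoint)).trans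
      (LinearEquiv.ofEq _ _ (aux_range f Cf hCf.sup_eq_top))
  let gEq : Cg ≃ₗ[K] LinearMap.range g :=
    (LinearEquiv.ofInjective _ (aux_inj g Cg hCg.disjoint)).trans
      (LinearEquiv.ofEq _ _ (aux_range g Cg hCg.sup_eq_top))
  have fEq_apply : ∀ c : Cf, (fEq c : W) = f c := fun c => rfl
  have gEq_apply : ∀ c : Cg, (gEq c : W) = g c := fun c => rfl
  have hfr : finrank K Cf = finrank K (LinearMap.range f) := fEq.finrank_eq
  have hgr : finrank K Cg = finrank K (LinearMap.range g) := gEq.finrank_eq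
  have hkf := LinearMap.finrank_range_add_finrank_ker f
  have hkg := LinearMap.finrank_range_add_finrank_ker g
  have hDfr := Submodule.finrank_add_eq_of_isCompl hDf
  have hDgr := Submodule.finrank_add_eq_of_isCompl hDg
  let κ : (LinearMap.ker f) ≃ₗ[K] (LinearMap.ker g) :=
    LinearEquiv.ofFinrankEq _ _ (by omega)
  let α : Cf ≃ₗ[K] Cg := LinearEquiv.ofFinrankEq _ _ (by omega)
  let δ : Dg ≃ₗ[K] Df := LinearEquiv.ofFinrankEq _ _ (by omega)
  let β : (LinearMap.range g) ≃ₗ[K] (LinearMap.range f) :=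
    gEq.symm.trans (α.symm.trans fEq)
  let e : V ≃ₗ[K] V :=
    (Submodule.prodEquivOfIsCompl Cf (LinearMap.ker f) hCf.symm).symm.trans
      ((α.prodCongr κ).trans (Submodule.prodEquivOfIsCompl Cg (LinearMap.ker g) hCg.symm))
  let e' : W ≃ₗ[K] W :=
    (Submodule.prodEquivOfIsCompl (LinearMap.range g) Dg hDg).symm.trans
      ((β.prodCongr δ).trans (Submodule.prodEquivOfIsCompl (LinearMap.range f) Df hDf))
  refine ⟨e, e', fun v => ?_⟩
  have hv : v ∈ Cf ⊔ LinearMap.ker f := by rw [hCf.symm.sup_eq_top]; trivial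
  obtain ⟨c, hc, k, hk, rfl⟩ := Submodule.mem_sup.mp hv
  have he : e (c + k) = ↑(α ⟨c, hc⟩) + ↑(κ ⟨k, hk⟩) := by
    have hsymm : (Submodule.prodEquivOfIsCompl Cf (LinearMap.ker f) hCf.symm).symm (c + k)
        = (⟨c, hc⟩, ⟨k, hk⟩) := by
      rw [LinearEquiv.symm_apply_eq]
      simp
    simp only [e, LinearEquiv.trans_apply, hsymm, LinearEquiv.prodCongr_apply,
      Submodule.coe_prodEquivOfIsCompl']
  rw [he]
  have hgk : g ↑(κ ⟨k, hk⟩) = 0 := (κ ⟨k, hk⟩).2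
  rw [show g (↑(α ⟨c, hc⟩) + ↑(κ ⟨k, hk⟩)) = g ↑(α ⟨c, hc⟩) from by
    rw [map_add, hgk, add_zero]]
  have hg1 : g ↑(α ⟨c, hc⟩) = ↑(gEq (α ⟨c, hc⟩)) := (gEq_apply _).symm
  rw [hg1]
  have hsymm' : (Submodule.prodEquivOfIsCompl (LinearMap.range g) Dg hDg).symm
      ↑(gEq (α ⟨c, hc⟩)) = (gEq (α ⟨c, hc⟩), 0) :=
    Submodule.prodEquivOfIsCompl_symm_apply_left _ _ hDg _
  simp only [e', LinearEquiv.trans_apply, hsymm', LinearEquiv.prodCongr_apply, map_zero,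
    Submodule.coe_prodEquivOfIsCompl']
  have hβ : β (gEq (α ⟨c, hc⟩)) = fEq ⟨c, hc⟩ := by
    simp only [β, LinearEquiv.trans_apply, LinearEquiv.symm_apply_apply]
  rw [hβ, fEq_apply]
  simp [LinearMap.mem_ker.mp hk]

lemma matrix_equiv_of_rank_eq {m n : ℕ} (A B : Matrix (Fin m) (Fin n) ℂ)
    (h : A.rank = B.rank) :
    ∃ (P : Matrix (Fin m) (Fin m) ℂ) (Q : Matrix (Fin n) (Fin n) ℂ),
      IsUnit P ∧ IsUnit Q ∧ A = P * B * Q := by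
  obtain ⟨e, e', he⟩ := equiv_of_rank_eq A.mulVecLin B.mulVecLin h
  refine ⟨LinearMap.toMatrix' e'.toLinearMap, LinearMap.toMatrix' e.toLinearMap, ?_, ?_, ?_⟩
  · exact ⟨⟨LinearMap.toMatrix' e'.toLinearMap, LinearMap.toMatrix' e'.symm.toLinearMap,
      by rw [← LinearMap.toMatrix'_comp]; simp,
      by rw [← LinearMap.toMatrix'_comp]; simp⟩, rfl⟩
  · exact ⟨⟨LinearMap.toMatrix' e.toLinearMap, LinearMap.toMatrix' e.symm.toLinearMap,
      by rw [← LinearMap.toMatrix'_comp]; simp,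
      by rw [← LinearMap.toMatrix'_comp]; simp⟩, rfl⟩
  · have : A.mulVecLin = (e'.toLinearMap.comp B.mulVecLin).comp e.toLinearMap := by
      ext v; simp [he]
    have h2 := congrArg LinearMap.toMatrix' this
    rw [LinearMap.toMatrix'_comp, LinearMap.toMatrix'_comp] at h2
    simp only [← Matrix.toLin'_apply', LinearMap.toMatrix'_toLin'] at h2; exact h2

open Matrix

variable {m n : Type*} [Fintype m] [Fintype n]

/-- The linear functional `A ↦ ⟨X, A⟩` (Frobenius inner product). -/
noncomputable def lfun (X : Matrix m n ℂ) : Matrix m n ℂ →ₗ[ℂ] ℂ where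
  toFun A := ∑ a, ∑ b, (starRingEnd ℂ) (X a b) * A a b
  map_add' A B := by
    simp [Matrix.add_apply, mul_add, Finset.sum_add_distrib]
  map_smul' c A := by
    simp [Matrix.smul_apply, smul_eq_mul, Finset.mul_sum, mul_left_comm]

lemma lfun_apply (X A : Matrix m n ℂ) :
    lfun X A = ∑ a, ∑ b, (starRingEnd ℂ) (X a b) * A a b := rfl

lemma lfun_eq_trace (X A : Matrix m n ℂ) : lfun X A = Matrix.trace (Xᴴ * A) := by
  rw [lfun_apply, Matrix.trace]
  simp only [Matrix.diag_apply, Matrix.mul_apply, Matrix.conjTranspose_apply]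
  rw [Finset.sum_comm]
  simp [RCLike.star_def]

lemma lfun_self_ne_zero (X : Matrix m n ℂ) (hX : X ≠ 0) : lfun X X ≠ 0 := by
  rw [lfun_apply]
  have : ∀ a b, (starRingEnd ℂ) (X a b) * X a b = (Complex.normSq (X a b) : ℂ) := by
    intro a b; rw [Complex.normSq_eq_conj_mul_self]
  simp only [this]
  push_cast [← Complex.ofReal_sum]
  rw [Ne, Complex.ofReal_eq_zero]
  intro h0
  apply hX
  ext a b
  have h1 : ∀ a ∈ Finset.univ, (0:ℝ) ≤ ∑ b, Complex.normSq (X a b) :=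
    fun a _ => Finset.sum_nonneg fun b _ => Complex.normSq_nonneg _
  have h2 := (Finset.sum_eq_zero_iff_of_nonneg h1).mp h0 a (Finset.mem_univ a)
  have h3 := (Finset.sum_eq_zero_iff_of_nonneg
    (fun b _ => Complex.normSq_nonneg (X a b))).mp h2 b (Finset.mem_univ b)
  simpa using Complex.normSq_eq_zero.mp h3

lemma lfun_conj_mul {d₂ d₃ : ℕ} (X : Matrix (Fin d₂) (Fin d₃) ℂ)
    (L₂ : Matrix (Fin d₂) (Fin d₂) ℂ) (L₃ : Matrix (Fin d₃) (Fin d₃) ℂ)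
    (A : Matrix (Fin d₂) (Fin d₃) ℂ) :
    lfun X (L₂ * A * L₃ᵀ) = lfun (L₂ᴴ * X * (L₃ᴴ)ᵀ) A := by
  rw [lfun_eq_trace, lfun_eq_trace]
  have h4 : ((L₃ᴴᵀ)ᴴ : Matrix (Fin d₃) (Fin d₃) ℂ) = L₃ᵀ := by
    ext i j; simp
  have : ((L₂ᴴ * X * (L₃ᴴ)ᵀ)ᴴ : Matrix (Fin d₃) (Fin d₂) ℂ) = L₃ᵀ * Xᴴ * L₂ := by
    simp [Matrix.conjTranspose_mul, Matrix.mul_assoc, h4]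
  rw [this]
  rw [show Xᴴ * (L₂ * A * L₃ᵀ) = (Xᴴ * L₂ * A) * L₃ᵀ by rw [Matrix.mul_assoc, Matrix.mul_assoc, Matrix.mul_assoc],
    Matrix.trace_mul_comm, Matrix.mul_assoc, Matrix.mul_assoc, Matrix.mul_assoc]

open Module

lemma span_eq_ker_lfun {d₁ d₂ d₃ : ℕ} (hd : d₁ + 1 = d₂ * d₃)
    (v : Fin d₁ → Matrix (Fin d₂) (Fin d₃) ℂ) (hv : LinearIndependent ℂ v)
    (X : Matrix (Fin d₂) (Fin d₃) ℂ) (hX : X ≠ 0)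
    (horth : ∀ i, lfun X (v i) = 0) :
    Submodule.span ℂ (Set.range v) = LinearMap.ker (lfun X) := by
  have hle : Submodule.span ℂ (Set.range v) ≤ LinearMap.ker (lfun X) := by
    rw [Submodule.span_le]
    rintro _ ⟨i, rfl⟩
    exact LinearMap.mem_ker.mpr (horth i)
  have hM : finrank ℂ (Matrix (Fin d₂) (Fin d₃) ℂ) = d₂ * d₃ := by
    simp [Module.finrank_matrix]
  have hsurj : Function.Surjective (lfun X) := by
    intro c
    refine ⟨(c / lfun X X) • X, ?_⟩
    rw [_root_.map_smul, smul_eq_mul, div_mul_cancel₀ c (lfun_self_ne_zero X hX)]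
  have hrange : finrank ℂ (LinearMap.range (lfun X)) = 1 := by
    rw [LinearMap.range_eq_top.mpr hsurj]
    simp
  have hker := LinearMap.finrank_range_add_finrank_ker (lfun X)
  rw [hrange, hM] at hker
  have hspan : finrank ℂ (Submodule.span ℂ (Set.range v)) = d₁ := by
    rw [finrank_span_eq_card hv, Fintype.card_fin]
  apply Submodule.eq_of_le_of_finrank_le hle
  rw [hspan]; omega

lemma lfun_prop {d₂ d₃ : ℕ} (X Y : Matrix (Fin d₂) (Fin d₃) ℂ) (hX : X ≠ 0)
    (h : ∀ A, lfun X A = 0 → lfun Y A = 0) :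
    ∃ c : ℂ, Y = c • X := by
  set x₀ : Matrix (Fin d₂) (Fin d₃) ℂ := (lfun X X)⁻¹ • X with hx₀
  have hfx₀ : lfun X x₀ = 1 := by
    rw [hx₀, _root_.map_smul, smul_eq_mul, inv_mul_cancel₀ (lfun_self_ne_zero X hX)]
  have key : ∀ A, lfun Y A = lfun Y x₀ * lfun X A := by
    intro A
    have h0 : lfun X (A - lfun X A • x₀) = 0 := by
      rw [map_sub, _root_.map_smul, hfx₀, smul_eq_mul, mul_one, sub_self]
    have h1 := h _ h0
    rw [map_sub, _root_.map_smul, smul_eq_mul, sub_eq_zero] at h1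
    rw [h1, mul_comm]
  refine ⟨(starRingEnd ℂ) (lfun Y x₀), ?_⟩
  ext a b
  have hab := key (Matrix.single a b 1)
  have hstd : ∀ Z : Matrix (Fin d₂) (Fin d₃) ℂ,
      lfun Z (Matrix.single a b 1) = (starRingEnd ℂ) (Z a b) := by
    intro Z
    rw [lfun_apply]
    rw [Finset.sum_eq_single a, Finset.sum_eq_single b]
    · simp [Matrix.single]
    · intro b' _ hb'; simp [Matrix.single, Ne.symm hb']
    · simp
    · intro a' _ ha'
      apply Finset.sum_eq_zero
      intro b' _
      simp [Matrix.single, Ne.symm ha']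
    · simp
  rw [hstd, hstd] at hab
  have := congrArg (starRingEnd ℂ) hab
  simpa [Matrix.smul_apply, smul_eq_mul] using this

lemma rank_smul_eq {d₂ d₃ : ℕ} (X : Matrix (Fin d₂) (Fin d₃) ℂ) (c : ℂ) (hc : c ≠ 0) :
    (c • X).rank = X.rank := by
  have h1 : c • X = (c • (1 : Matrix (Fin d₂) (Fin d₂) ℂ)) * X := by
    rw [Matrix.smul_mul, Matrix.one_mul]
  rw [h1]
  apply Matrix.rank_mul_eq_right_of_isUnit_det
  simp [Matrix.det_smul, hc]


lemma cancel_lr {d₂ d₃ : ℕ} (L : Matrix (Fin d₂) (Fin d₂) ℂ) (R : Matrix (Fin d₃) (Fin d₃) ℂ)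
    (hL : IsUnit L.det) (hR : IsUnit R.det) (A : Matrix (Fin d₂) (Fin d₃) ℂ) :
    L⁻¹ * (L * A * R) * R⁻¹ = A := by
  rw [show L * A * R = L * (A * R) from by rw [Matrix.mul_assoc], ← Matrix.mul_assoc L⁻¹ L,
    Matrix.nonsing_inv_mul _ hL, Matrix.one_mul, Matrix.mul_assoc,
    Matrix.mul_nonsing_inv _ hR, Matrix.mul_one]

theorem slocc_equiv_iff_complement_rank_eq
    (d₁ d₂ d₃ : ℕ) (hd : d₁ + 1 = d₂ * d₃)
    (φ ψ : Fin d₁ → Matrix (Fin d₂) (Fin d₃) ℂ)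
    (hφ : LinearIndependent ℂ φ) (hψ : LinearIndependent ℂ ψ)
    (φ' ψ' : Matrix (Fin d₂) (Fin d₃) ℂ) (hφ' : φ' ≠ 0) (hψ' : ψ' ≠ 0)
    (hoφ : ∀ i, ∑ a, ∑ b, (starRingEnd ℂ) (φ' a b) * φ i a b = 0)
    (hoψ : ∀ i, ∑ a, ∑ b, (starRingEnd ℂ) (ψ' a b) * ψ i a b = 0) :
    (∃ (L₁ : Matrix (Fin d₁) (Fin d₁) ℂ) (L₂ : Matrix (Fin d₂) (Fin d₂) ℂ)
        (L₃ : Matrix (Fin d₃) (Fin d₃) ℂ),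
        IsUnit L₁ ∧ IsUnit L₂ ∧ IsUnit L₃ ∧
        ∀ i, φ i = ∑ j, L₁ i j • (L₂ * ψ j * L₃ᵀ)) ↔
      φ'.rank = ψ'.rank := by
  have hoφ' : ∀ i, lfun φ' (φ i) = 0 := hoφ
  have hoψ' : ∀ i, lfun ψ' (ψ i) = 0 := hoψ
  constructor
  · rintro ⟨L₁, L₂, L₃, hU1, hU2, hU3, hEq⟩
    set Y : Matrix (Fin d₂) (Fin d₃) ℂ := L₂ᴴ * φ' * (L₃ᴴ)ᵀ with hY
    have hdet2 : IsUnit (L₂ᴴ).det := by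
      rw [Matrix.det_conjTranspose]
      exact ((Matrix.isUnit_iff_isUnit_det L₂).mp hU2).star
    have hdet3 : IsUnit ((L₃ᴴ)ᵀ).det := by
      rw [Matrix.det_transpose, Matrix.det_conjTranspose]
      exact ((Matrix.isUnit_iff_isUnit_det L₃).mp hU3).star
    have hrankY : Y.rank = φ'.rank := by
      rw [hY, Matrix.rank_mul_eq_left_of_isUnit_det _ _ hdet3,
        Matrix.rank_mul_eq_right_of_isUnit_det _ _ hdet2]
    have hw : ∀ j, lfun Y (ψ j) = 0 := by
      have hrow : ∀ i, ∑ j, L₁ i j * lfun Y (ψ j) = 0 := by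
        intro i
        have h0 := hoφ' i
        rw [hEq i, map_sum] at h0
        simpa [lfun_conj_mul, smul_eq_mul] using h0
      intro j
      have hwv : L₁ *ᵥ (fun j => lfun Y (ψ j)) = 0 := by
        ext i
        simpa [Matrix.mulVec, dotProduct] using hrow i
      have h2 := congrArg (fun v => L₁⁻¹ *ᵥ v) hwv
      simpa [Matrix.mulVec_mulVec,
        Matrix.nonsing_inv_mul _ ((Matrix.isUnit_iff_isUnit_det L₁).mp hU1),
        Matrix.mulVec_zero, Matrix.one_mulVec] using congrFun h2 j
    have hY0 : Y ≠ 0 := by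
      intro h0
      apply hφ'
      have := cancel_lr L₂ᴴ ((L₃ᴴ)ᵀ) hdet2 hdet3 φ'
      rw [← hY, h0, Matrix.mul_zero, Matrix.zero_mul] at this
      exact this.symm
    have hspanψ := span_eq_ker_lfun hd ψ hψ ψ' hψ' hoψ'
    have hsub : Submodule.span ℂ (Set.range ψ) ≤ LinearMap.ker (lfun Y) :=
      Submodule.span_le.mpr (by rintro _ ⟨j, rfl⟩; exact LinearMap.mem_ker.mpr (hw j))
    obtain ⟨c, hc⟩ := lfun_prop ψ' Y hψ' (fun A hA =>
      hsub (hspanψ ▸ LinearMap.mem_ker.mpr hA))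
    have hc0 : c ≠ 0 := by
      rintro rfl
      rw [zero_smul] at hc
      exact hY0 hc
    rw [← hrankY, hc, rank_smul_eq _ _ hc0]
  · intro hrank
    obtain ⟨P, Q, hP, hQ, hPQ⟩ := matrix_equiv_of_rank_eq ψ' φ' hrank.symm
    set L₂ : Matrix (Fin d₂) (Fin d₂) ℂ := Pᴴ with hL₂
    set L₃ : Matrix (Fin d₃) (Fin d₃) ℂ := (Qᵀ)ᴴ with hL₃
    have hU2 : IsUnit L₂ := by
      rw [Matrix.isUnit_iff_isUnit_det, hL₂, Matrix.det_conjTranspose]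
      exact ((Matrix.isUnit_iff_isUnit_det P).mp hP).star
    have hU3 : IsUnit L₃ := by
      rw [Matrix.isUnit_iff_isUnit_det, hL₃, Matrix.det_conjTranspose, Matrix.det_transpose]
      exact ((Matrix.isUnit_iff_isUnit_det Q).mp hQ).star
    have hYψ : L₂ᴴ * φ' * (L₃ᴴ)ᵀ = ψ' := by
      rw [hL₂, hL₃, Matrix.conjTranspose_conjTranspose, Matrix.conjTranspose_conjTranspose,
        Matrix.transpose_transpose]
      exact hPQ.symm
    -- the linear map A ↦ L₂ * A * L₃ᵀ
    let Tl : Matrix (Fin d₂) (Fin d₃) ℂ →ₗ[ℂ] Matrix (Fin d₂) (Fin d₃) ℂ :=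
      { toFun := fun A => L₂ * A * L₃ᵀ
        map_add' := fun A B => by
          change L₂ * (A + B) * L₃ᵀ = L₂ * A * L₃ᵀ + L₂ * B * L₃ᵀ
          rw [Matrix.mul_add, Matrix.add_mul]
        map_smul' := fun c A => by
          change L₂ * (c • A) * L₃ᵀ = c • (L₂ * A * L₃ᵀ)
          rw [Matrix.mul_smul, Matrix.smul_mul] }
    have hkerT : LinearMap.ker Tl = ⊥ := by
      rw [LinearMap.ker_eq_bot]
      intro A B hAB
      have hA := cancel_lr L₂ L₃ᵀ ((Matrix.isUnit_iff_isUnit_det L₂).mp hU2)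
        (by rw [Matrix.det_transpose]; exact (Matrix.isUnit_iff_isUnit_det L₃).mp hU3) A
      have hB := cancel_lr L₂ L₃ᵀ ((Matrix.isUnit_iff_isUnit_det L₂).mp hU2)
        (by rw [Matrix.det_transpose]; exact (Matrix.isUnit_iff_isUnit_det L₃).mp hU3) B
      rw [← hA, ← hB]
      change L₂⁻¹ * (Tl A) * (L₃ᵀ)⁻¹ = L₂⁻¹ * (Tl B) * (L₃ᵀ)⁻¹
      rw [hAB]
    have hspanφ := span_eq_ker_lfun hd φ hφ φ' hφ' hoφ'
    have hmem : ∀ j, Tl (ψ j) ∈ Submodule.span ℂ (Set.range φ) := by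
      intro j
      rw [hspanφ]
      refine LinearMap.mem_ker.mpr ?_
      show lfun φ' (L₂ * ψ j * L₃ᵀ) = 0
      rw [lfun_conj_mul, hYψ]
      exact hoψ' j
    set W := Submodule.span ℂ (Set.range φ) with hW
    have hbW : finrank ℂ W = d₁ := by
      rw [hW, finrank_span_eq_card hφ, Fintype.card_fin]
    rcases Nat.eq_zero_or_pos d₁ with h0 | hpos
    · -- degenerate case d₁ = 0 : then d₂*d₃ = 1 and everything is trivial
      refine ⟨1, L₂, L₃, isUnit_one, hU2, hU3, fun i => absurd i.2 (by omega)⟩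
    haveI : Nonempty (Fin d₁) := ⟨⟨0, hpos⟩⟩
    let b : Basis (Fin d₁) ℂ W := Basis.span hφ
    have hu0 : LinearIndependent ℂ (Tl ∘ ψ) := hψ.map' Tl hkerT
    let u : Fin d₁ → W := fun j => ⟨Tl (ψ j), hmem j⟩
    have hu : LinearIndependent ℂ u :=
      LinearIndependent.of_comp W.subtype (by exact hu0)
    let b' : Basis (Fin d₁) ℂ W :=
      basisOfLinearIndependentOfCardEqFinrank hu (by rw [Fintype.card_fin, hbW])
    have hb' : ∀ j, (b' j : Matrix (Fin d₂) (Fin d₃) ℂ) = Tl (ψ j) := by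
      intro j
      rw [show b' j = u j from by rw [coe_basisOfLinearIndependentOfCardEqFinrank]]
    refine ⟨(b'.toMatrix b)ᵀ, L₂, L₃, ?_, hU2, hU3, ?_⟩
    · rw [Matrix.isUnit_iff_isUnit_det, Matrix.det_transpose]
      have hmul := Basis.toMatrix_mul_toMatrix_flip b b'
      have hdet := congrArg Matrix.det hmul
      rw [Matrix.det_mul, Matrix.det_one] at hdet
      exact IsUnit.of_mul_eq_one _ (by rw [mul_comm] at hdet; exact hdet)
    · intro i
      have hrep : (b i : Matrix (Fin d₂) (Fin d₃) ℂ)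
          = ∑ j, (b'.toMatrix b) j i • (b' j : Matrix (Fin d₂) (Fin d₃) ℂ) := by
        have h1 := congrArg W.subtype (b'.sum_toMatrix_smul_self b i)
        rw [map_sum] at h1
        simpa using h1.symm
      have hbi : (b i : Matrix (Fin d₂) (Fin d₃) ℂ) = φ i := congrArg Subtype.val (Basis.span_apply hφ i)
      rw [← hbi, hrep]
      refine Finset.sum_congr rfl fun j _ => ?_
      rw [hb' j, Matrix.transpose_apply]
      rfl
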